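/- Let X be a path-connected polyhedron (or more generally a Euclidean neighborhood retract). Then the topological complexity TC(X) is less than or equal to the symmetric topological complexity TC^S(X). -/

import Mathlib

open scoped ENat

universe u v

/-- Space of paths in `X`: continuous maps from the unit interval. -/
abbrev PathSp (X : Type u) [TopologicalSpace X] := C(unitInterval, X)

/-- Reversal of a path. -/
def pathRev {X : Type u} [TopologicalSpace X] (γ : PathSp X) : PathSp X :=
  γ.comp ⟨unitInterval.symm, unitInterval.continuous_symm⟩

/-- `P'X`: paths with distinct endpoints. -/
def PpX (X : Type u) [TopologicalSpace X] := {γ : PathSp X // γ 0 ≠ γ 1}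

instance (X : Type u) [TopologicalSpace X] : TopologicalSpace (PpX X) :=
  instTopologicalSpaceSubtype

/-- Reversal involution on `P'X`. -/
def revP {X : Type u} [TopologicalSpace X] (γ : PpX X) : PpX X :=
  ⟨pathRev γ.1, by
    simp only [pathRev, ContinuousMap.comp_apply, ContinuousMap.coe_mk,
      unitInterval.symm_zero, unitInterval.symm_one]
    exact γ.2.symm⟩

/-- `F(X;2)`: ordered configuration space of two distinct points. -/
def F2 (X : Type u) [TopologicalSpace X] := {z : X × X // z.1 ≠ z.2}

instance (X : Type u) [TopologicalSpace X] : TopologicalSpace (F2 X) :=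
  instTopologicalSpaceSubtype

/-- The swap involution on `F(X;2)`. -/
def swapF {X : Type u} [TopologicalSpace X] (z : F2 X) : F2 X :=
  ⟨(z.1.2, z.1.1), z.2.symm⟩

/-- The two-endpoint map `π' : P'X → F(X;2)`. -/
def pip {X : Type u} [TopologicalSpace X] (γ : PpX X) : F2 X :=
  ⟨(γ.1 0, γ.1 1), γ.2⟩

/-- Quotient of `P'X` by the reversal involution. -/
def PpQ (X : Type u) [TopologicalSpace X] := Quot (fun a b : PpX X => b = revP a)

/-- `B(X;2)`: unordered configuration space, quotient of `F(X;2)` by the swap. -/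
def BX2 (X : Type u) [TopologicalSpace X] := Quot (fun a b : F2 X => b = swapF a)

instance (X : Type u) [TopologicalSpace X] : TopologicalSpace (PpQ X) :=
  inferInstanceAs (TopologicalSpace (Quot _))
instance (X : Type u) [TopologicalSpace X] : TopologicalSpace (BX2 X) :=
  inferInstanceAs (TopologicalSpace (Quot _))

/-- The quotient fibration `π_G : P'X/G → B(X;2)`. -/
def piG (X : Type u) [TopologicalSpace X] : PpQ X → BX2 X :=
  Quot.map pip (by
    rintro a b rfl
    refine Subtype.ext (Prod.ext ?_ ?_) <;>
      simp [pip, revP, swapF, pathRev])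

/-- `p` admits continuous local sections over an open cover of the base by `k` sets. -/
def SecCover {E : Type u} {B : Type v} [TopologicalSpace E] [TopologicalSpace B]
    (p : E → B) (k : ℕ) : Prop :=
  ∃ U : Fin k → Set B, (∀ i, IsOpen (U i)) ∧ (⋃ i, U i) = Set.univ ∧
    ∀ i, ∃ s : C(U i, E), ∀ x : U i, p (s x) = (x : B)

/-- The Schwarz genus of a map: minimal number of open sets covering the base over each
of which the map admits a continuous section (`⊤` if there is no such finite cover). -/
noncomputable def genus {E : Type u} {B : Type v} [TopologicalSpace E] [TopologicalSpace B]
    (p : E → B) : ℕ∞ :=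
  sInf {m : ℕ∞ | ∃ k : ℕ, m = (k : ℕ∞) ∧ SecCover p k}

/-- Topological complexity: the Schwarz genus of the two-endpoint path fibration. -/
noncomputable def TCx (X : Type u) [TopologicalSpace X] : ℕ∞ :=
  genus (fun γ : PathSp X => (γ 0, γ 1))

/-- Symmetric topological complexity: `1 +` the Schwarz genus of `π_G`. -/
noncomputable def TCS (X : Type u) [TopologicalSpace X] : ℕ∞ :=
  1 + genus (piG X)

/-- `X` is a Euclidean neighbourhood retract: it embeds in some `ℝⁿ` with image a retract
of an open neighbourhood. -/
def IsENR (X : Type u) [TopologicalSpace X] : Prop :=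
  ∃ (n : ℕ) (e : X → (Fin n → ℝ)), Topology.IsEmbedding e ∧
    ∃ N : Set (Fin n → ℝ), IsOpen N ∧ Set.range e ⊆ N ∧
      ∃ r : C(N, X), ∀ (x : X) (h : e x ∈ N), r ⟨e x, h⟩ = x


theorem quotInvol_mk_eq {α : Type*} {f : α → α} (hf : ∀ a, f (f a) = a) {x y : α} :
    Quot.mk (fun a b => b = f a) x = Quot.mk (fun a b => b = f a) y ↔ (y = x ∨ y = f x) := by
  constructor
  · intro h
    have H := Quot.eq.mp h
    clear h
    induction H with
    | rel a b hab => exact Or.inr hab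
    | refl a => exact Or.inl rfl
    | symm a b _ ih =>
      rcases ih with h' | h'
      · exact Or.inl h'.symm
      · exact Or.inr (by rw [h', hf])
    | trans a b c _ _ ih1 ih2 =>
      rcases ih1 with h1 | h1 <;> rcases ih2 with h2 | h2
      · exact Or.inl (h2.trans h1)
      · exact Or.inr (by rw [h2, h1])
      · exact Or.inr (h2.trans h1)
      · exact Or.inl (by rw [h2, h1, hf])
  · rintro (rfl | rfl)
    · rfl
    · exact Quot.sound rfl

theorem quotInvol_isOpenMap {α : Type*} [TopologicalSpace α] {f : α → α}
    (hf : ∀ a, f (f a) = a) (hc : Continuous f) :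
    IsOpenMap (Quot.mk (fun a b => b = f a)) := by
  intro T hT
  have hpre : Quot.mk (fun a b => b = f a) ⁻¹' (Quot.mk (fun a b => b = f a) '' T)
      = T ∪ f ⁻¹' T := by
    ext x
    simp only [Set.mem_preimage, Set.mem_image, Set.mem_union]
    constructor
    · rintro ⟨y, hy, hxy⟩
      rcases (quotInvol_mk_eq hf).mp hxy with h | h
      · exact Or.inl (h ▸ hy)
      · refine Or.inr ?_
        have : f x = y := by rw [h, hf]
        exact this ▸ hy
    · rintro (hx | hx)
      · exact ⟨x, hx, rfl⟩
      · exact ⟨f x, hx, (quotInvol_mk_eq hf).mpr (Or.inr (hf x).symm)⟩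
  rw [← isQuotientMap_quot_mk.isOpen_preimage, hpre]
  exact hT.union (hT.preimage hc)
section Invol

variable {X : Type u} [TopologicalSpace X]

theorem revP_revP (γ : PpX X) : revP (revP (X := X) γ) = γ := by
  apply Subtype.ext
  ext t
  simp [revP, pathRev, unitInterval.symm_symm]

theorem swapF_swapF (z : F2 X) : swapF (swapF (X := X) z) = z := by
  apply Subtype.ext
  simp [swapF]

theorem continuous_revP : Continuous (revP (X := X)) :=
  Continuous.subtype_mk
    ((ContinuousMap.continuous_precomp ⟨unitInterval.symm, unitInterval.continuous_symm⟩).comp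
      continuous_subtype_val) _

theorem continuous_swapF : Continuous (swapF (X := X)) :=
  Continuous.subtype_mk
    (((continuous_snd.comp continuous_subtype_val).prodMk
      (continuous_fst.comp continuous_subtype_val))) _

theorem revP_zero (γ : PpX X) : (revP γ).1 0 = γ.1 1 := by
  simp [revP, pathRev]

theorem revP_one (γ : PpX X) : (revP γ).1 1 = γ.1 0 := by
  simp [revP, pathRev]

theorem piG_mk (γ : PpX X) : piG X (Quot.mk _ γ) = Quot.mk _ (pip γ) := rfl

end Invol

theorem enr_diag (X : Type u) [TopologicalSpace X] (hX : IsENR X) :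
    ∃ U₀ : Set (X × X), IsOpen U₀ ∧ (∀ a : X, (a, a) ∈ U₀) ∧
      ∃ s : C(U₀, PathSp X), ∀ z : U₀, ((s z) 0, (s z) 1) = (z : X × X) := by
  obtain ⟨n, e, he, N, hN, hrange, r, hr⟩ := hX
  have hec : Continuous e := he.continuous
  set φ : (X × X) × unitInterval → (Fin n → ℝ) :=
    fun p => (1 - (p.2 : ℝ)) • e p.1.1 + (p.2 : ℝ) • e p.1.2 with hφdef
  have hφc : Continuous φ := by
    apply Continuous.add
    · exact (continuous_const.sub (continuous_subtype_val.comp continuous_snd)).smul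
        (hec.comp (continuous_fst.comp continuous_fst))
    · exact (continuous_subtype_val.comp continuous_snd).smul
        (hec.comp (continuous_snd.comp continuous_fst))
  set U₀ : Set (X × X) := {z | ∀ t : unitInterval, φ (z, t) ∈ N} with hU₀def
  have hU₀open : IsOpen U₀ := by
    have hset : U₀ = (ContinuousMap.curry ⟨φ, hφc⟩) ⁻¹' {f | Set.MapsTo f Set.univ N} := by
      ext z
      simp [Set.MapsTo, hU₀def]
    rw [hset]
    exact (ContinuousMap.isOpen_setOf_mapsTo isCompact_univ hN).preimage
      (ContinuousMap.curry ⟨φ, hφc⟩).continuous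
  have hdiag : ∀ a : X, (a, a) ∈ U₀ := by
    intro a t
    have : φ ((a, a), t) = e a := by
      show (1 - (t : ℝ)) • e a + (t : ℝ) • e a = e a
      rw [← add_smul]
      simp
    rw [this]
    exact hrange (Set.mem_range_self a)
  have hmem : ∀ (z : U₀) (t : unitInterval), φ ((z : X × X), t) ∈ N := fun z => z.2
  set G : C(U₀ × unitInterval, X) :=
    ⟨fun p => r ⟨φ ((p.1 : X × X), p.2), hmem p.1 p.2⟩, by
      apply r.continuous.comp
      apply Continuous.subtype_mk
      exact hφc.comp ((continuous_subtype_val.comp continuous_fst).prodMk continuous_snd)⟩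
    with hGdef
  refine ⟨U₀, hU₀open, hdiag, G.curry, ?_⟩
  intro z
  have h0 : φ ((z : X × X), 0) = e (z : X × X).1 := by
    show (1 - ((0 : unitInterval) : ℝ)) • _ + ((0 : unitInterval) : ℝ) • _ = _
    norm_num
  have h1 : φ ((z : X × X), 1) = e (z : X × X).2 := by
    show (1 - ((1 : unitInterval) : ℝ)) • _ + ((1 : unitInterval) : ℝ) • _ = _
    norm_num
  have e0 : G.curry z 0 = (z : X × X).1 := by
    show r ⟨φ ((z : X × X), 0), hmem z 0⟩ = (z : X × X).1
    have : (⟨φ ((z : X × X), 0), hmem z 0⟩ : N) = ⟨e (z : X × X).1, h0 ▸ hmem z 0⟩ :=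
      Subtype.ext h0
    rw [this, hr]
  have e1 : G.curry z 1 = (z : X × X).2 := by
    show r ⟨φ ((z : X × X), 1), hmem z 1⟩ = (z : X × X).2
    have : (⟨φ ((z : X × X), 1), hmem z 1⟩ : N) = ⟨e (z : X × X).2, h1 ▸ hmem z 1⟩ :=
      Subtype.ext h1
    rw [this, hr]
  exact Prod.ext e0 e1
theorem offdiag_sections (X : Type u) [TopologicalSpace X] [T2Space X]
    (V : Set (BX2 X)) (hV : IsOpen V) (s : C(V, PpQ X))
    (hs : ∀ v : V, piG X (s v) = (v : BX2 X)) :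
    ∃ U : Set (X × X), IsOpen U ∧
      (∀ (z : X × X) (h : z.1 ≠ z.2), Quot.mk _ (⟨z, h⟩ : F2 X) ∈ V → z ∈ U) ∧
      ∃ σ : C(U, PathSp X), ∀ z : U, ((σ z) 0, (σ z) 1) = (z : X × X) := by
  classical
  set q : F2 X → BX2 X := Quot.mk _ with hq
  set O : Set (F2 X) := q ⁻¹' V with hO
  set U : Set (X × X) := Subtype.val '' O with hU
  have hOopen : IsOpen O := hV.preimage continuous_quot_mk
  have hF2open : IsOpen {z : X × X | z.1 ≠ z.2} := by
    rw [show {z : X × X | z.1 ≠ z.2} = (Set.diagonal X)ᶜ from rfl]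
    exact isClosed_diagonal.isOpen_compl
  have hvalopen : IsOpenMap (Subtype.val : F2 X → X × X) :=
    hF2open.isOpenMap_subtype_val
  have hUopen : IsOpen U := hvalopen O hOopen
  have hUmem : ∀ (z : X × X) (h : z.1 ≠ z.2), Quot.mk _ (⟨z, h⟩ : F2 X) ∈ V → z ∈ U :=
    fun z h hz => ⟨⟨z, h⟩, hz, rfl⟩
  have neU : ∀ u : U, (u : X × X).1 ≠ (u : X × X).2 := by
    rintro ⟨z, w, hw, rfl⟩
    exact w.2
  have memU : ∀ u : U, q ⟨(u : X × X), neU u⟩ ∈ V := by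
    rintro ⟨z, w, hw, rfl⟩
    have : (⟨(w : X × X), neU ⟨w.1, w, hw, rfl⟩⟩ : F2 X) = w := Subtype.ext rfl
    rw [this]
    exact hw
  set F : U → PpQ X := fun u => s ⟨q ⟨(u : X × X), neU u⟩, memU u⟩ with hFdef
  have hFc : Continuous F := by
    apply s.continuous.comp
    apply Continuous.subtype_mk
    exact continuous_quot_mk.comp (Continuous.subtype_mk continuous_subtype_val _)
  have hF : ∀ u : U, piG X (F u) = q ⟨(u : X × X), neU u⟩ := fun u => hs _
  -- existence and uniqueness of the preferred representative
  have exu : ∀ u : U, ∃! γ : PpX X,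
      Quot.mk (fun a b => b = revP a) γ = F u ∧ γ.1 0 = (u : X × X).1 := by
    intro u
    obtain ⟨γ', hγ'⟩ := Quot.exists_rep (F u)
    have h2 : Quot.mk (fun a b => b = swapF a) (pip γ') = q ⟨(u : X × X), neU u⟩ := by
      rw [← hF u, ← hγ']
      rfl
    have hcase := (quotInvol_mk_eq (swapF_swapF) ).mp h2
    have huniq : ∀ γw : PpX X,
        (Quot.mk (fun a b => b = revP a) γw = F u ∧ γw.1 0 = (u : X × X).1) →
        ∀ y : PpX X, (Quot.mk (fun a b => b = revP a) y = F u ∧ y.1 0 = (u : X × X).1) →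
        y = γw := by
      rintro γw ⟨hmw, h0w⟩ y ⟨hmy, h0y⟩
      rcases (quotInvol_mk_eq (revP_revP)).mp (hmy.trans hmw.symm) with h | h
      · exact h.symm
      · exfalso
        have : γw.1 0 = y.1 1 := by rw [h, revP_zero]
        exact y.2 (h0y.trans (h0w.symm.trans this))
    rcases hcase with h | h
    · have hval : (u : X × X) = (γ'.1 0, γ'.1 1) := congrArg Subtype.val h
      refine ⟨γ', ⟨hγ', ?_⟩, fun y hy => huniq γ' ⟨hγ', ?_⟩ y hy⟩ <;>
        exact (congrArg Prod.fst hval).symm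
    · have hval : (u : X × X) = (γ'.1 1, γ'.1 0) := congrArg Subtype.val h
      have hsnd : Quot.mk (fun a b => b = revP a) γ'
          = Quot.mk (fun a b => b = revP a) (revP γ') := Quot.sound rfl
      have hmrev : Quot.mk (fun a b => b = revP a) (revP γ') = F u := hsnd.symm.trans hγ'
      have h0rev : (revP γ').1 0 = (u : X × X).1 := by
        rw [revP_zero]
        exact (congrArg Prod.fst hval).symm
      exact ⟨revP γ', ⟨hmrev, h0rev⟩, fun y hy => huniq (revP γ') ⟨hmrev, h0rev⟩ y hy⟩
  set g : U → PpX X := fun u => (exu u).choose with hg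
  have hg1 : ∀ u, Quot.mk (fun a b => b = revP a) (g u) = F u := fun u => (exu u).choose_spec.1.1
  have hg0 : ∀ u, (g u).1 0 = (u : X × X).1 := fun u => (exu u).choose_spec.1.2
  have hgend : ∀ u, (g u).1 1 = (u : X × X).2 := by
    intro u
    have h2 : Quot.mk (fun a b => b = swapF a) (pip (g u)) = q ⟨(u : X × X), neU u⟩ := by
      rw [← hF u, ← hg1 u]
      rfl
    rcases (quotInvol_mk_eq (swapF_swapF)).mp h2 with h | h
    · have hval : (u : X × X) = ((g u).1 0, (g u).1 1) := congrArg Subtype.val h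
      exact (congrArg Prod.snd hval).symm
    · have hval : (u : X × X) = ((g u).1 1, (g u).1 0) := congrArg Subtype.val h
      exact absurd ((congrArg Prod.snd hval).trans (hg0 u)).symm (neU u)
  have hgc : Continuous g := by
    rw [continuous_iff_continuousAt]
    intro u₀
    rw [ContinuousAt, tendsto_nhds]
    intro S hS hgS
    obtain ⟨A, B, hA, hB, haA, hbB, hAB⟩ := t2_separation (neU u₀)
    have hev0 : Continuous fun γ : PpX X => γ.1 0 :=
      (continuous_eval_const (0 : unitInterval)).comp continuous_subtype_val
    have hev1 : Continuous fun γ : PpX X => γ.1 1 :=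
      (continuous_eval_const (1 : unitInterval)).comp continuous_subtype_val
    set T : Set (PpX X) :=
      S ∩ ((fun γ : PpX X => γ.1 0) ⁻¹' A) ∩ ((fun γ : PpX X => γ.1 1) ⁻¹' B) with hT
    have hTopen : IsOpen T := ((hS.inter (hA.preimage hev0)).inter (hB.preimage hev1))
    have hγT : g u₀ ∈ T := ⟨⟨hgS, by rw [Set.mem_preimage, hg0]; exact haA⟩,
      by rw [Set.mem_preimage, hgend]; exact hbB⟩
    set W : Set U := F ⁻¹' (Quot.mk (fun a b => b = revP a) '' T) ∩
      ((fun u : U => (u : X × X).1) ⁻¹' A) with hW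
    have hWopen : IsOpen W :=
      (((quotInvol_isOpenMap revP_revP continuous_revP) T hTopen).preimage hFc).inter
        (hA.preimage (continuous_fst.comp continuous_subtype_val))
    have hu₀W : u₀ ∈ W := ⟨⟨g u₀, hγT, hg1 u₀⟩, haA⟩
    refine Filter.mem_of_superset (hWopen.mem_nhds hu₀W) ?_
    rintro u ⟨⟨δ, hδT, hδmk⟩, huA⟩
    rcases (quotInvol_mk_eq (revP_revP)).mp (hδmk.trans (hg1 u).symm) with h | h
    · rw [Set.mem_preimage, h]
      exact hδT.1.1
    · exfalso
      have h1 : (g u).1 0 = δ.1 1 := by rw [h, revP_zero]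
      have h2 : (g u).1 0 ∈ A := by rw [hg0]; exact huA
      exact Set.disjoint_left.mp hAB h2 (h1 ▸ hδT.2)
  refine ⟨U, hUopen, hUmem, ⟨fun u => (g u).1, continuous_subtype_val.comp hgc⟩, ?_⟩
  intro z
  exact Prod.ext (hg0 z) (hgend z)
theorem seccover_genus_le {E : Type u} {B : Type v} [TopologicalSpace E] [TopologicalSpace B]
    {p : E → B} {k : ℕ} (h : SecCover p k) : genus p ≤ (k : ℕ∞) :=
  sInf_le ⟨k, rfl, h⟩

/-- For a path-connected ENR (e.g. a polyhedron), `TC(X) ≤ TC^S(X)`. -/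
theorem stmt3 (X : Type u) [TopologicalSpace X] [PathConnectedSpace X]
    (hX : IsENR X) : TCx X ≤ TCS X := by
  classical
  haveI : T2Space X := by
    obtain ⟨n, e, he, -⟩ := hX
    exact he.t2Space
  by_cases htop : genus (piG X) = ⊤
  · rw [TCS, htop]
    simp
  · have hne : ∃ k : ℕ, SecCover (piG X) k := by
      by_contra h
      push_neg at h
      apply htop
      rw [genus, show {m : ℕ∞ | ∃ k : ℕ, m = (k : ℕ∞) ∧ SecCover (piG X) k} = ∅ by
        ext m; simp only [Set.mem_setOf_eq, Set.mem_empty_iff_false, iff_false]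
        rintro ⟨k, -, hk⟩; exact h k hk]
      exact sInf_empty
    set k₀ := Nat.find hne with hk₀
    have hsec : SecCover (piG X) k₀ := Nat.find_spec hne
    have hgen_ge : (k₀ : ℕ∞) ≤ genus (piG X) := by
      apply le_sInf
      rintro m ⟨k, rfl, hk⟩
      exact_mod_cast Nat.find_min' hne hk
    obtain ⟨V, hVopen, hVcover, hVsec⟩ := hsec
    choose sV hsV using hVsec
    obtain ⟨U₀, hU₀open, hU₀diag, s₀, hs₀⟩ := enr_diag X hX
    have H : ∀ i : Fin k₀, ∃ U : Set (X × X), IsOpen U ∧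
        (∀ (z : X × X) (h : z.1 ≠ z.2), Quot.mk _ (⟨z, h⟩ : F2 X) ∈ V i → z ∈ U) ∧
        ∃ σ : C(U, PathSp X), ∀ z : U, ((σ z) 0, (σ z) 1) = (z : X × X) :=
      fun i => offdiag_sections X (V i) (hVopen i) (sV i) (hsV i)
    choose W hWopen hWmem hWsec using H
    have hcov : SecCover (fun γ : PathSp X => (γ 0, γ 1)) (k₀ + 1) := by
      refine ⟨Fin.cases U₀ W, ?_, ?_, ?_⟩
      · intro i
        induction i using Fin.cases with
        | zero => simpa using hU₀open
        | succ i => simpa using hWopen i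
      · ext z
        simp only [Set.mem_iUnion, Set.mem_univ, iff_true]
        by_cases hz : z.1 = z.2
        · refine ⟨0, ?_⟩
          rw [show z = (z.1, z.1) from Prod.ext rfl hz.symm]
          simpa using hU₀diag z.1
        · have : Quot.mk (fun a b => b = swapF a) (⟨z, hz⟩ : F2 X) ∈ ⋃ i, V i := by
            rw [hVcover]; trivial
          obtain ⟨i, hi⟩ := Set.mem_iUnion.mp this
          refine ⟨i.succ, ?_⟩
          simpa using hWmem i z hz hi
      · intro i
        induction i using Fin.cases with
        | zero =>
          simp only [Fin.cases_zero]
          exact ⟨s₀, hs₀⟩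
        | succ i =>
          simp only [Fin.cases_succ]
          exact hWsec i
    have hTC : TCx X ≤ ((k₀ + 1 : ℕ) : ℕ∞) := seccover_genus_le hcov
    calc TCx X ≤ ((k₀ + 1 : ℕ) : ℕ∞) := hTC
      _ = (k₀ : ℕ∞) + 1 := by push_cast; ring
      _ ≤ genus (piG X) + 1 := by exact add_le_add hgen_ge le_rfl
      _ = 1 + genus (piG X) := add_comm _ _
      _ = TCS X := rfl
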